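/- If (r_i) is a sequence of positive reals converging to r > 0 and Ω is a closed subset of a real Hilbert space which is r_i-convex for every i, then Ω is r-convex. -/

import Mathlib

open Metric Set Filter
open scoped InnerProductSpace ENNReal Topology

variable {X : Type*} [NormedAddCommGroup X] [InnerProductSpace ℝ X] [CompleteSpace X]

/-- The "lens" of `x` and `y`: the intersection of all closed balls of radius `r`
containing both `x` and `y` (equal to the whole space if no such ball exists). -/
def lens (r : ℝ) (x y : X) : Set X :=
  ⋂ c ∈ {c : X | x ∈ closedBall c r ∧ y ∈ closedBall c r}, closedBall c r

/-- A set `Ω` is `r`-convex if for all `x, y ∈ Ω` the lens of `x` and `y` is contained in `Ω`. -/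
def IsRConvex (r : ℝ) (Ω : Set X) : Prop :=
  ∀ x ∈ Ω, ∀ y ∈ Ω, lens r x y ⊆ Ω

lemma mem_lens_iff {r : ℝ} {x y z : X} :
    z ∈ lens r x y ↔ ∀ c : X, dist x c ≤ r → dist y c ≤ r → dist z c ≤ r := by
  simp [lens, mem_iInter, mem_closedBall, and_imp]

lemma lens_antitone {s t : ℝ} (hst : s ≤ t) (x y : X) : lens t x y ⊆ lens s x y := by
  intro z hz
  rw [mem_lens_iff] at hz ⊢
  intro c hx hy
  rcases eq_or_ne z c with rfl | hzc
  · simpa using le_trans dist_nonneg hx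
  · have hnorm : (0:ℝ) < ‖z - c‖ := by
      rwa [norm_pos_iff, sub_ne_zero]
    set u : X := ((t - s) * ‖z - c‖⁻¹) • (z - c) with hu
    have hcu : dist c (c - u) = ‖u‖ := by
      rw [dist_eq_norm]; congr 1; abel
    have hun : ‖u‖ = t - s := by
      rw [hu, norm_smul, norm_mul, Real.norm_eq_abs, Real.norm_eq_abs,
        abs_of_nonneg (by linarith), abs_of_nonneg (by positivity)]
      field_simp
    have hxu : dist x (c - u) ≤ t := by
      calc dist x (c - u) ≤ dist x c + dist c (c - u) := dist_triangle _ _ _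
        _ ≤ s + (t - s) := by
            rw [hcu, hun]
            linarith
        _ = t := by ring
    have hyu : dist y (c - u) ≤ t := by
      calc dist y (c - u) ≤ dist y c + dist c (c - u) := dist_triangle _ _ _
        _ ≤ s + (t - s) := by
            rw [hcu, hun]
            linarith
        _ = t := by ring
    have hzu := hz (c - u) hxu hyu
    have hdist : dist z (c - u) = ‖z - c‖ + (t - s) := by
      rw [dist_eq_norm]
      have : z - (c - u) = (1 + (t - s) * ‖z - c‖⁻¹) • (z - c) := by
        rw [hu]; module
      have hpos : (0:ℝ) ≤ 1 + (t - s) * ‖z - c‖⁻¹ := by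
        have : 0 ≤ (t - s) * ‖z - c‖⁻¹ := mul_nonneg (by linarith) (by positivity)
        linarith
      rw [this, norm_smul, Real.norm_eq_abs, abs_of_nonneg hpos]
      field_simp
    rw [hdist] at hzu
    rw [dist_eq_norm]
    linarith

/-- arithmetic: basic facts about `ε = √(t²-r²)`. -/
lemma aux_eps {r t ε : ℝ} (hr : 0 < r) (hrt : r ≤ t) (hε0 : 0 ≤ ε)
    (hε2 : ε ^ 2 = t ^ 2 - r ^ 2) : ε ≤ t ∧ t - ε ≤ r := by
  have ht0 : (0:ℝ) < t := lt_of_lt_of_le hr hrt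
  have hεt : ε ≤ t := by nlinarith
  refine ⟨hεt, ?_⟩
  nlinarith [mul_nonneg hε0 (sub_nonneg.2 hεt)]

/-- arithmetic: admissibility of the scaled center. -/
lemma aux_adm {a b t p κ : ℝ} (h1 : a ^ 2 - 2 * p + b ^ 2 ≤ t ^ 2)
    (h2 : a ^ 2 + 2 * p + b ^ 2 ≤ t ^ 2) (hκ0 : 0 ≤ κ) (hκ1 : κ ≤ 1) :
    a ^ 2 - 2 * (κ * p) + b ^ 2 ≤ t ^ 2 ∧ a ^ 2 + 2 * (κ * p) + b ^ 2 ≤ t ^ 2 := by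
  constructor
  · nlinarith [mul_nonneg hκ0 (sub_nonneg.2 h1), mul_nonneg (sub_nonneg.2 hκ1)
      (sub_nonneg.2 (show a ^ 2 + b ^ 2 ≤ t ^ 2 by nlinarith))]
  · nlinarith [mul_nonneg hκ0 (sub_nonneg.2 h2), mul_nonneg (sub_nonneg.2 hκ1)
      (sub_nonneg.2 (show a ^ 2 + b ^ 2 ≤ t ^ 2 by nlinarith))]

/-- arithmetic: the key inequality. -/
lemma aux_key {r t ε b s' : ℝ} (hr : 0 < r) (hε0 : 0 ≤ ε) (hεt : ε ≤ t)
    (hε2 : ε ^ 2 = t ^ 2 - r ^ 2) (hεb : ε ≤ b) (hbt : b ≤ t)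
    (hs0 : 0 ≤ s') (hs2 : s' ^ 2 = b ^ 2 - ε ^ 2) :
    r * (b - ε) ≤ (t - ε) * s' := by
  apply le_of_pow_le_pow_left₀ two_ne_zero (mul_nonneg (by linarith) hs0)
  have hdiff : ((t - ε) * s') ^ 2 - (r * (b - ε)) ^ 2 =
      2 * ε * (t - ε) * (t - b) * (b - ε) := by
    linear_combination (t - ε) ^ 2 * hs2 - (b - ε) ^ 2 * hε2
  have hfact : 0 ≤ 2 * ε * (t - ε) * (t - b) * (b - ε) :=
    mul_nonneg (mul_nonneg (mul_nonneg (by linarith) (by linarith)) (by linarith)) (by linarith)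
  linarith

lemma scaled_mem_lens {r t : ℝ} (hr : 0 < r) (hrt : r ≤ t) {x y z : X}
    (hxy : ‖x - y‖ ≤ 2 * r) (hz : z ∈ lens r x y) :
    midpoint ℝ x y + ((t - Real.sqrt (t ^ 2 - r ^ 2)) / r) • (z - midpoint ℝ x y)
      ∈ lens t x y := by
  set m := midpoint ℝ x y with hm
  set ε := Real.sqrt (t ^ 2 - r ^ 2) with hεdef
  have ht0 : (0:ℝ) < t := lt_of_lt_of_le hr hrt
  have hε0 : 0 ≤ ε := Real.sqrt_nonneg _
  have hε2 : ε ^ 2 = t ^ 2 - r ^ 2 := Real.sq_sqrt (by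
    have := pow_le_pow_left₀ hr.le hrt 2; linarith)
  obtain ⟨hεt, hsub1⟩ := aux_eps hr hrt hε0 hε2
  have htε : 0 ≤ t - ε := by linarith
  set l := (t - ε) / r with hl
  have hl0 : 0 ≤ l := div_nonneg htε hr.le
  have hl1 : l ≤ 1 := by rw [hl, div_le_one hr]; exact hsub1
  have hlr : l * r = t - ε := div_mul_cancel₀ _ hr.ne'
  rw [mem_lens_iff] at hz ⊢
  intro c hxc hyc
  set d := x - m with hd
  set v := c - m with hv
  set w := z - m with hw
  have h2m : m + m = x + y := midpoint_add_self ℝ x y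
  have hyd : y - m = -d := by
    rw [hd, neg_sub]
    rw [sub_eq_sub_iff_add_eq_add, add_comm y x, ← h2m, add_comm]
  have ha : ‖d‖ ≤ r := by
    have hxyd : x - y = d + d := by
      rw [hd, show x - y = x + x - (x + y) by abel, ← h2m]; abel
    have h2n : ‖x - y‖ = 2 * ‖d‖ := by rw [hxyd, ← two_smul ℝ d, norm_smul]; simp
    rw [h2n] at hxy
    linarith
  have hdvx : dist x c = ‖d - v‖ := by rw [dist_eq_norm]; congr 1; rw [hd, hv]; abel
  have hdvy : dist y c = ‖d + v‖ := by
    rw [dist_eq_norm]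
    have h' : y - c = -(d + v) := by
      have h'' : y - c = (y - m) - v := by rw [hv]; abel
      rw [h'', hyd]; abel
    rw [h', norm_neg]
  have h1 : ‖d‖ ^ 2 - 2 * ⟪d, v⟫_ℝ + ‖v‖ ^ 2 ≤ t ^ 2 := by
    rw [← norm_sub_sq_real]
    exact pow_le_pow_left₀ (norm_nonneg _) (hdvx ▸ hxc) 2
  have h2 : ‖d‖ ^ 2 + 2 * ⟪d, v⟫_ℝ + ‖v‖ ^ 2 ≤ t ^ 2 := by
    rw [← norm_add_sq_real]
    exact pow_le_pow_left₀ (norm_nonneg _) (hdvy ▸ hyc) 2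
  have hbt : ‖v‖ ≤ t := by
    apply le_of_pow_le_pow_left₀ two_ne_zero ht0.le
    have := sq_nonneg ‖d‖
    linarith
  have hgoal_eq : dist (m + l • w) c = ‖l • w - v‖ := by
    rw [dist_eq_norm]; congr 1; rw [hv, hw]; module
  rw [hgoal_eq]
  rcases le_or_gt ‖v‖ ε with hbε | hbε
  · -- small v : use center m itself
    have hwr : ‖w‖ ≤ r := by
      have hxm : dist x m ≤ r := by rw [dist_eq_norm]; exact ha
      have hym : dist y m ≤ r := by rw [dist_eq_norm, hyd, norm_neg]; exact ha
      have := hz m hxm hym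
      rwa [dist_eq_norm] at this
    calc ‖l • w - v‖ ≤ ‖l • w‖ + ‖v‖ := norm_sub_le _ _
      _ = l * ‖w‖ + ‖v‖ := by rw [norm_smul, Real.norm_eq_abs, abs_of_nonneg hl0]
      _ ≤ l * r + ε := add_le_add (mul_le_mul_of_nonneg_left hwr hl0) hbε
      _ = t := by rw [hlr]; ring
  · -- large v : use scaled center m + κ • v
    have hb0 : 0 < ‖v‖ := lt_of_le_of_lt hε0 hbε
    set s' := Real.sqrt (‖v‖ ^ 2 - ε ^ 2) with hs'def
    have hs0 : 0 ≤ s' := Real.sqrt_nonneg _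
    have hs2 : s' ^ 2 = ‖v‖ ^ 2 - ε ^ 2 := Real.sq_sqrt (by
      have := pow_le_pow_left₀ hε0 hbε.le 2; linarith)
    have hs'b : s' ≤ ‖v‖ := by
      apply le_of_pow_le_pow_left₀ two_ne_zero hb0.le
      have := sq_nonneg ε
      linarith
    set κ := s' / ‖v‖ with hκdef
    have hκ0 : 0 ≤ κ := div_nonneg hs0 hb0.le
    have hκ1 : κ ≤ 1 := by rw [hκdef, div_le_one hb0]; exact hs'b
    have hκb : κ * ‖v‖ = s' := div_mul_cancel₀ _ hb0.ne'
    have hκv : ‖κ • v‖ = κ * ‖v‖ := by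
      rw [norm_smul, Real.norm_eq_abs, abs_of_nonneg hκ0]
    have hκsq : ‖κ • v‖ ^ 2 = ‖v‖ ^ 2 - ε ^ 2 := by rw [hκv, hκb, hs2]
    have hinx : ⟪d, κ • v⟫_ℝ = κ * ⟪d, v⟫_ℝ := real_inner_smul_right _ _ _
    obtain ⟨hadm1, hadm2⟩ := aux_adm h1 h2 hκ0 hκ1
    have hxc₀ : dist x (m + κ • v) ≤ r := by
      rw [dist_eq_norm]
      have heq : x - (m + κ • v) = d - κ • v := by rw [hd]; abel
      rw [heq]
      apply le_of_pow_le_pow_left₀ two_ne_zero hr.le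
      rw [norm_sub_sq_real, hinx, hκsq]
      linarith
    have hyc₀ : dist y (m + κ • v) ≤ r := by
      rw [dist_eq_norm]
      have heq : y - (m + κ • v) = -(d + κ • v) := by
        have h'' : y - (m + κ • v) = (y - m) - κ • v := by abel
        rw [h'', hyd]; abel
      rw [heq, norm_neg]
      apply le_of_pow_le_pow_left₀ two_ne_zero hr.le
      rw [norm_add_sq_real, hinx, hκsq]
      linarith
    have hzc₀ : ‖w - κ • v‖ ≤ r := by
      have h' := hz (m + κ • v) hxc₀ hyc₀
      rw [dist_eq_norm] at h'
      have heq : z - (m + κ • v) = w - κ • v := by rw [hw]; abel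
      rwa [heq] at h'
    have key : r * (‖v‖ - ε) ≤ (t - ε) * s' :=
      aux_key hr hε0 hεt hε2 hbε.le hbt hs0 hs2
    have hsplit : l • w - v = l • (w - κ • v) + (l * κ - 1) • v := by module
    have hlκ : l * κ ≤ 1 := mul_le_one₀ hl1 hκ0 hκ1
    calc ‖l • w - v‖ = ‖l • (w - κ • v) + (l * κ - 1) • v‖ := by rw [hsplit]
      _ ≤ ‖l • (w - κ • v)‖ + ‖(l * κ - 1) • v‖ := norm_add_le _ _
      _ = l * ‖w - κ • v‖ + (1 - l * κ) * ‖v‖ := by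
          rw [norm_smul, norm_smul, Real.norm_eq_abs, Real.norm_eq_abs,
            abs_of_nonneg hl0, abs_of_nonpos (by linarith), neg_sub]
      _ ≤ l * r + (1 - l * κ) * ‖v‖ :=
          add_le_add_left (mul_le_mul_of_nonneg_left hzc₀ hl0) _
      _ ≤ t := by
          have hls : ‖v‖ - ε ≤ l * s' := by
            rw [hl, div_mul_eq_mul_div, le_div_iff₀ hr]
            linarith [key]
          have hre : (1 - l * κ) * ‖v‖ = ‖v‖ - l * (κ * ‖v‖) := by ring
          rw [hre, hκb, hlr]
          linarith

/-- If a closed set `Ω` is `rᵢ`-convex for a sequence of positive reals `rᵢ → r > 0`,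
then `Ω` is `r`-convex. -/
theorem isRConvex_of_seq (hdim : 2 ≤ Module.rank ℝ X) {r : ℝ} (hr : 0 < r)
    {ri : ℕ → ℝ} (hri : ∀ i, 0 < ri i) (hlim : Tendsto ri atTop (𝓝 r))
    {Ω : Set X} (hcl : IsClosed Ω) (h : ∀ i, IsRConvex (ri i) Ω) : IsRConvex r Ω := by
  intro x hx y hy z hz
  by_cases hcase : ∃ i, ri i ≤ r
  · obtain ⟨i, hi⟩ := hcase
    exact h i x hx y hy (lens_antitone hi x y hz)
  push_neg at hcase
  by_cases hd : ‖x - y‖ ≤ 2 * r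
  · -- approximate `z` by points scaled toward the midpoint
    set m := midpoint ℝ x y with hm
    have hmem : ∀ i, m + ((ri i - Real.sqrt ((ri i) ^ 2 - r ^ 2)) / r) • (z - m) ∈ Ω :=
      fun i => h i x hx y hy (scaled_mem_lens hr (hcase i).le hd hz)
    have h1 : Tendsto (fun i => (ri i) ^ 2 - r ^ 2) atTop (𝓝 0) := by
      have := (hlim.pow 2).sub (tendsto_const_nhds (x := r ^ 2))
      simpa using this
    have h2 : Tendsto (fun i => Real.sqrt ((ri i) ^ 2 - r ^ 2)) atTop (𝓝 0) := by
      have := (Real.continuous_sqrt.tendsto 0).comp h1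
      simpa [Function.comp_def] using this
    have h3 : Tendsto (fun i => (ri i - Real.sqrt ((ri i) ^ 2 - r ^ 2)) / r) atTop (𝓝 1) := by
      have := (hlim.sub h2).div_const r
      simpa [div_self hr.ne'] using this
    have h4 : Tendsto (fun i => m + ((ri i - Real.sqrt ((ri i) ^ 2 - r ^ 2)) / r) • (z - m))
        atTop (𝓝 z) := by
      have := tendsto_const_nhds (x := m) (f := atTop (α := ℕ)) |>.add
        (h3.smul_const (z - m))
      simpa using this
    exact hcl.mem_of_tendsto h4 (Eventually.of_forall hmem)
  · -- `‖x - y‖ > 2r` : eventually no ball of radius `ri i` contains both points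
    push_neg at hd
    have hev : ∀ᶠ i in atTop, ri i < ‖x - y‖ / 2 :=
      hlim.eventually_lt_const (by linarith)
    obtain ⟨i, hi⟩ := hev.exists
    apply h i x hx y hy
    rw [mem_lens_iff]
    intro c hxc hyc
    exfalso
    have htri : dist x y ≤ dist x c + dist y c := dist_triangle_right x y c
    rw [dist_eq_norm] at htri
    linarith
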